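/- Let K be a simplicial complex on the vertex set [m] = {1,…,m}. If the Alexander dual K^∨ of K is collapsible, then the geometric realization |K| ⊆ ℝ^m is contractible. -/

import Mathlib

open Finset

/-- A simplicial complex: a collection of subsets of the vertex set, closed under
taking subsets and containing the empty set. -/
def IsComplex {V : Type*} (K : Set (Finset V)) : Prop :=
  ∅ ∈ K ∧ ∀ σ ∈ K, ∀ τ ⊆ σ, τ ∈ K

/-- The Alexander dual of `K` with respect to the full vertex set `[m]`. -/
def alexDual {m : ℕ} (K : Set (Finset (Fin m))) : Set (Finset (Fin m)) :=
  {σ | Finset.univ \ σ ∉ K}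

/-- An elementary collapse of `L` removes a pair of faces `{τ, σ}` where `τ ⊊ σ` and `σ`
is the unique face of `L` properly containing `τ`. -/
def ElemCollapse {V : Type*} (L L' : Set (Finset V)) : Prop :=
  ∃ τ σ : Finset V, τ ∈ L ∧ σ ∈ L ∧ τ ⊂ σ ∧ (∀ ρ ∈ L, τ ⊂ ρ → ρ = σ) ∧
    L' = L \ {τ, σ}

/-- `L` is collapsible: some finite sequence of elementary collapses transforms `L`
into the complex `{∅, {v}}` consisting of a single vertex `v`. -/
def Collapsible {V : Type*} (L : Set (Finset V)) : Prop :=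
  ∃ v : V, Relation.ReflTransGen ElemCollapse L ({∅, {v}} : Set (Finset V))

/-- The geometric realization of `L` inside `ℝ^m`: the union over the nonempty faces `σ`
of the convex hull of the standard basis vectors indexed by `σ`. -/
def geomReal {m : ℕ} (L : Set (Finset (Fin m))) : Set (Fin m → ℝ) :=
  ⋃ σ ∈ {σ : Finset (Fin m) | σ ∈ L ∧ σ ≠ ∅},
    convexHull ℝ ((fun i => Pi.single i (1 : ℝ)) '' (σ : Set (Fin m)))

/-! ### Auxiliary definitions and lemmas -/

/-- The geometric simplex on a finite vertex set. -/
def stdHull {m : ℕ} (C : Finset (Fin m)) : Set (Fin m → ℝ) :=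
  convexHull ℝ ((fun i => Pi.single i (1 : ℝ)) '' (C : Set (Fin m)))

/-- The complex whose non-faces are complements of faces of `L`. -/
def dualOf {m : ℕ} (L : Set (Finset (Fin m))) : Set (Finset (Fin m)) :=
  {ρ | Finset.univ \ ρ ∉ L}

lemma mem_stdHull_iff {m : ℕ} {C : Finset (Fin m)} {z : Fin m → ℝ} :
    z ∈ stdHull C ↔ (∀ i, 0 ≤ z i) ∧ (∀ i ∉ C, z i = 0) ∧ ∑ i, z i = 1 := by
  constructor
  · intro hz
    have hsub : stdHull C ⊆ {z : Fin m → ℝ |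
        (∀ i, 0 ≤ z i) ∧ (∀ i ∉ C, z i = 0) ∧ ∑ i, z i = 1} := by
      apply convexHull_min
      · rintro _ ⟨i, hi, rfl⟩
        refine ⟨fun j => ?_, fun j hj => ?_, ?_⟩
        · simp only []; rw [Pi.single_apply]; split <;> norm_num
        · simp only []; rw [Pi.single_apply, if_neg]; rintro rfl; exact hj hi
        · simp [Pi.single_apply]
      · rintro z1 ⟨h10, h1z, h1s⟩ z2 ⟨h20, h2z, h2s⟩ a b ha hb hab
        refine ⟨fun i => ?_, fun i hi => ?_, ?_⟩
        · exact add_nonneg (mul_nonneg ha (h10 i)) (mul_nonneg hb (h20 i))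
        · simp [Pi.add_apply, h1z i hi, h2z i hi]
        · simp only [Pi.add_apply, Pi.smul_apply, smul_eq_mul]
          rw [Finset.sum_add_distrib, ← Finset.mul_sum, ← Finset.mul_sum, h1s, h2s]
          simpa using hab
    exact hsub hz
  · rintro ⟨h0, hout, hsum⟩
    have hCsum : ∑ i ∈ C, z i = 1 := by
      rw [Finset.sum_subset C.subset_univ (fun i _ hi => hout i hi)]
      exact hsum
    have hcm : C.centerMass z (fun i => Pi.single i (1 : ℝ)) = z := by
      rw [Finset.centerMass_eq_of_sum_1 _ _ hCsum]
      funext j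
      rw [Finset.sum_apply]
      by_cases hj : j ∈ C
      · rw [Finset.sum_eq_single j]
        · simp
        · intro i hi hij
          simp [Pi.single_apply, hij, Ne.symm hij]
        · intro h; exact absurd hj h
      · rw [Finset.sum_eq_zero, (hout j hj)]
        intro i hi
        have : j ≠ i := by rintro rfl; exact hj hi
        simp [Pi.single_apply, this]
    rw [← hcm]
    exact C.centerMass_mem_convexHull (fun i _ => h0 i) (by rw [hCsum]; norm_num)
      (fun i hi => Set.mem_image_of_mem _ hi)

lemma mem_geomReal {m : ℕ} {L : Set (Finset (Fin m))} {y : Fin m → ℝ} :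
    y ∈ geomReal L ↔ ∃ σ, σ ∈ L ∧ σ ≠ ∅ ∧ y ∈ stdHull σ := by
  simp only [geomReal, Set.mem_iUnion, Set.mem_setOf_eq, stdHull, exists_prop]
  tauto

lemma stdHull_mono {m : ℕ} {C D : Finset (Fin m)} (h : C ⊆ D) : stdHull C ⊆ stdHull D :=
  convexHull_mono (Set.image_mono (by exact_mod_cast h))

lemma geomReal_mono {m : ℕ} {L L' : Set (Finset (Fin m))} (h : L ⊆ L') :
    geomReal L ⊆ geomReal L' := by
  intro y hy
  rw [mem_geomReal] at hy ⊢
  obtain ⟨σ, h1, h2, h3⟩ := hy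
  exact ⟨σ, h h1, h2, h3⟩

lemma univ_sdiff_sdiff {m : ℕ} (s : Finset (Fin m)) : univ \ (univ \ s) = s := by
  simp [Finset.sdiff_sdiff_self_left]

/-- A retract of a contractible space is contractible. -/
lemma contractible_of_retract {X Y : Type*} [TopologicalSpace X] [TopologicalSpace Y]
    (i : C(X, Y)) (r : C(Y, X)) (h : ∀ x, r (i x) = x) (hY : ContractibleSpace Y) :
    ContractibleSpace X := by
  have hy0 : (ContinuousMap.id Y).Nullhomotopic :=
    (contractible_iff_id_nullhomotopic Y).mp hY
  refine (contractible_iff_id_nullhomotopic X).mpr ?_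
  have heq : (ContinuousMap.id X) = r.comp ((ContinuousMap.id Y).comp i) := by
    ext x; simp [h]
  rw [heq]
  exact (hy0.comp_left i).comp_right r

/-- The map that retracts the simplex on `B ∪ {x}` (and anything above `B`) away from
the free face `B`, pushing mass from `B` onto the vertex `x`. -/
noncomputable def pushMap {m : ℕ} (B : Finset (Fin m)) (hB : B.Nonempty) (x : Fin m) :
    (Fin m → ℝ) → (Fin m → ℝ) :=
  fun y i => if i ∈ B then y i - max 0 (B.inf' hB y) else
    if i = x then y i + B.card * max 0 (B.inf' hB y) else y i

lemma pushMap_continuous {m : ℕ} (B : Finset (Fin m)) (hB : B.Nonempty) (x : Fin m) :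
    Continuous (pushMap B hB x) := by
  have ht : Continuous (fun y : Fin m → ℝ => max 0 (B.inf' hB y)) := by
    apply Continuous.max continuous_const
    exact Continuous.finset_inf'_apply hB (fun b _ => continuous_apply b)
  apply continuous_pi
  intro i
  unfold pushMap
  split_ifs with h1 h2
  · exact (continuous_apply i).sub ht
  · exact (continuous_apply i).add (continuous_const.mul ht)
  · exact continuous_apply i

lemma pushMap_eq_self {m : ℕ} {B : Finset (Fin m)} (hB : B.Nonempty) (x : Fin m)
    {y : Fin m → ℝ} (h0 : ∀ i, 0 ≤ y i) {b : Fin m} (hbB : b ∈ B) (hb0 : y b = 0) :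
    pushMap B hB x y = y := by
  have ht : max 0 (B.inf' hB y) = 0 := by
    apply max_eq_left
    calc B.inf' hB y ≤ y b := Finset.inf'_le _ hbB
    _ = 0 := hb0
  funext i
  unfold pushMap
  rw [ht]
  split_ifs <;> ring

lemma pushMap_mem {m : ℕ} {B A : Finset (Fin m)} (hB : B.Nonempty) {x : Fin m}
    (hxB : x ∉ B) (hxA : x ∈ A) (hBA : B ⊆ A) {y : Fin m → ℝ} (hy : y ∈ stdHull A) :
    ∃ b₀ ∈ B, pushMap B hB x y ∈ stdHull (A.erase b₀) := by
  obtain ⟨h0, hout, hsum⟩ := mem_stdHull_iff.mp hy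
  obtain ⟨b₀, hb₀B, hb₀min⟩ := Finset.exists_mem_eq_inf' hB y
  have ht : max 0 (B.inf' hB y) = y b₀ := by
    rw [hb₀min]; exact max_eq_right (hb₀min ▸ h0 b₀)
  refine ⟨b₀, hb₀B, mem_stdHull_iff.mpr ⟨?_, ?_, ?_⟩⟩
  · intro i
    unfold pushMap
    rw [ht]
    split_ifs with h1 h2
    · have : B.inf' hB y ≤ y i := Finset.inf'_le _ h1
      rw [hb₀min] at this
      linarith
    · have := h0 i
      have hc : (0:ℝ) ≤ B.card := by positivity
      nlinarith [h0 b₀]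
    · exact h0 i
  · intro i hi
    rw [Finset.mem_erase] at hi
    push_neg at hi
    unfold pushMap
    rw [ht]
    by_cases hib : i = b₀
    · subst hib
      rw [if_pos hb₀B]; ring
    · have hiA : i ∉ A := hi hib
      have hiB : i ∉ B := fun h => hiA (hBA h)
      have hix : i ≠ x := by rintro rfl; exact hiA hxA
      rw [if_neg hiB, if_neg hix]
      exact hout i hiA
  · have hgc : ∀ i, pushMap B hB x y i =
        y i + (if i ∈ B then -(y b₀) else if i = x then (B.card : ℝ) * y b₀ else 0) := by
      intro i
      unfold pushMap
      rw [ht]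
      split_ifs <;> ring
    rw [Finset.sum_congr rfl (fun i _ => hgc i), Finset.sum_add_distrib, hsum]
    have hsplit : ∑ i, (if i ∈ B then -(y b₀) else if i = x then (B.card : ℝ) * y b₀ else 0)
        = 0 := by
      rw [← Finset.sum_sdiff (B.subset_univ)]
      have h1 : ∑ i ∈ univ \ B, (if i ∈ B then -(y b₀) else
          if i = x then (B.card : ℝ) * y b₀ else 0) = (B.card : ℝ) * y b₀ := by
        rw [Finset.sum_congr rfl (fun i hi => if_neg (Finset.mem_sdiff.mp hi).2)]
        rw [Finset.sum_ite_eq' (univ \ B) x (fun _ => (B.card : ℝ) * y b₀)]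
        rw [if_pos (Finset.mem_sdiff.mpr ⟨Finset.mem_univ x, hxB⟩)]
      have h2 : ∑ i ∈ B, (if i ∈ B then -(y b₀) else
          if i = x then (B.card : ℝ) * y b₀ else 0) = -((B.card : ℝ) * y b₀) := by
        rw [Finset.sum_congr rfl (fun i hi => if_pos hi), Finset.sum_const, nsmul_eq_mul]
        ring
      rw [h1, h2]; ring
    rw [hsplit]; ring

/-- Base case: the dual of `{∅, {v}}` is a cone with apex `v`, hence star-convex. -/
lemma base_contractible {m : ℕ} {v : Fin m}
    (hu : (univ : Finset (Fin m)) ∉ ({∅, {v}} : Set (Finset (Fin m)))) :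
    ContractibleSpace ↥(geomReal (dualOf ({∅, {v}} : Set (Finset (Fin m))))) := by
  have huv : (univ : Finset (Fin m)) ≠ {v} := fun h => hu (by rw [h]; right; rfl)
  have hv : ({v} : Finset (Fin m)) ∈ dualOf ({∅, {v}} : Set (Finset (Fin m))) := by
    rintro (h | h)
    · have hsub : univ ⊆ ({v} : Finset (Fin m)) := Finset.sdiff_eq_empty_iff_subset.mp h
      exact huv (Finset.Subset.antisymm hsub (Finset.subset_univ _))
    · have hvv : v ∈ ({v} : Finset (Fin m)) := Finset.mem_singleton_self v
      rw [← h] at hvv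
      exact (Finset.mem_sdiff.mp hvv).2 (Finset.mem_singleton_self v)
  have hsingle : Pi.single v (1:ℝ) ∈ stdHull ({v} : Finset (Fin m)) := by
    rw [mem_stdHull_iff]
    refine ⟨fun i => ?_, fun i hi => ?_, ?_⟩
    · rw [Pi.single_apply]; split <;> norm_num
    · rw [Pi.single_apply, if_neg]
      exact fun h => hi (h ▸ Finset.mem_singleton_self v)
    · simp [Finset.sum_pi_single']
  have hc : Pi.single v (1:ℝ) ∈ geomReal (dualOf ({∅, {v}} : Set (Finset (Fin m)))) :=
    mem_geomReal.mpr ⟨{v}, hv, Finset.singleton_ne_empty v, hsingle⟩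
  have hstar : StarConvex ℝ (Pi.single v (1:ℝ))
      (geomReal (dualOf ({∅, {v}} : Set (Finset (Fin m))))) := by
    intro y hy a b ha hb hab
    obtain ⟨σ, hσ, hσne, hyσ⟩ := mem_geomReal.mp hy
    have hins : insert v σ ∈ dualOf ({∅, {v}} : Set (Finset (Fin m))) := by
      rintro (h | h)
      · have hsub : univ ⊆ insert v σ := Finset.sdiff_eq_empty_iff_subset.mp h
        have hsub2 : univ \ σ ⊆ {v} := by
          intro i hi
          rw [Finset.mem_sdiff] at hi
          rcases Finset.mem_insert.mp (hsub hi.1) with h' | h'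
          · exact Finset.mem_singleton.mpr h'
          · exact absurd h' hi.2
        rcases Finset.subset_singleton_iff.mp hsub2 with h' | h'
        · exact hσ (Or.inl h')
        · exact hσ (Or.inr h')
      · have hvv : v ∈ ({v} : Finset (Fin m)) := Finset.mem_singleton_self v
        rw [← h] at hvv
        exact (Finset.mem_sdiff.mp hvv).2 (Finset.mem_insert_self v σ)
    refine mem_geomReal.mpr ⟨insert v σ, hins, Finset.insert_ne_empty v σ, ?_⟩
    rw [mem_stdHull_iff] at hyσ ⊢
    obtain ⟨h0, hout, hsum⟩ := hyσ
    refine ⟨fun i => ?_, fun i hi => ?_, ?_⟩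
    · apply add_nonneg
      · apply mul_nonneg ha
        rw [Pi.single_apply]; split <;> norm_num
      · exact mul_nonneg hb (h0 i)
    · have hiv : i ≠ v := fun h => hi (h ▸ Finset.mem_insert_self v σ)
      have hiσ : i ∉ σ := fun h => hi (Finset.mem_insert_of_mem h)
      simp [Pi.single_apply, hiv, hout i hiσ]
    · simp only [Pi.add_apply, Pi.smul_apply, smul_eq_mul]
      rw [Finset.sum_add_distrib, ← Finset.mul_sum, ← Finset.mul_sum, hsum]
      simp [Finset.sum_pi_single']
      linarith
  exact hstar.contractibleSpace ⟨_, hc⟩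

/-- Inductive step: removing a free pair `{τ, σ}` from `L` corresponds to attaching a
free pair of simplices to the realization of `dualOf L`, of which the latter is a
retract. -/
lemma step_contractible {m : ℕ} {L : Set (Finset (Fin m))} {τ σ : Finset (Fin m)}
    (hσL : σ ∈ L) (hts : τ ⊂ σ) (huniq : ∀ ρ ∈ L, τ ⊂ ρ → ρ = σ)
    (hDC : ∀ s ∈ L, ∀ t ⊆ s, t ∈ L) (hu : (univ : Finset (Fin m)) ∉ L)
    (hbig : ContractibleSpace ↥(geomReal (dualOf (L \ {τ, σ})))) :
    ContractibleSpace ↥(geomReal (dualOf L)) := by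
  set B : Finset (Fin m) := univ \ σ with hBdef
  set A : Finset (Fin m) := univ \ τ with hAdef
  have hBA : B ⊆ A := Finset.sdiff_subset_sdiff (Finset.Subset.refl _) hts.subset
  obtain ⟨x, hxσ, hxτ⟩ := Finset.exists_of_ssubset hts
  have hxA : x ∈ A := Finset.mem_sdiff.mpr ⟨Finset.mem_univ x, hxτ⟩
  have hxB : x ∉ B := fun h => (Finset.mem_sdiff.mp h).2 hxσ
  have hB : B.Nonempty := by
    rw [hBdef, Finset.sdiff_nonempty]
    intro h
    exact hu ((Finset.Subset.antisymm (Finset.subset_univ σ) h) ▸ hσL)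
  have hBnot : ∀ ρ ∈ dualOf L, ¬ B ⊆ ρ := by
    intro ρ hρ hsub
    apply hρ
    have h1 : univ \ ρ ⊆ univ \ B :=
      Finset.sdiff_subset_sdiff (Finset.Subset.refl _) hsub
    rw [hBdef, univ_sdiff_sdiff] at h1
    exact hDC σ hσL _ h1
  have hid : ∀ ρ ∈ dualOf L, ∀ y ∈ stdHull ρ, pushMap B hB x y = y := by
    intro ρ hρ y hy
    rw [mem_stdHull_iff] at hy
    obtain ⟨b, hbB, hbρ⟩ := Set.not_subset.mp (by exact_mod_cast hBnot ρ hρ)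
    exact pushMap_eq_self hB x hy.1 hbB (hy.2.1 b hbρ)
  have herase : ∀ b₀ ∈ B, A.erase b₀ ∈ dualOf L := by
    intro b₀ hb₀ hmem
    have hb₀A : b₀ ∈ A := hBA hb₀
    have hτA : τ = univ \ A := (univ_sdiff_sdiff τ).symm
    have hss : τ ⊂ univ \ (A.erase b₀) := by
      constructor
      · rw [hτA]
        exact Finset.sdiff_subset_sdiff (Finset.Subset.refl _) (Finset.erase_subset b₀ A)
      · intro hsub
        have hb₀mem : b₀ ∈ univ \ (A.erase b₀) :=
          Finset.mem_sdiff.mpr ⟨Finset.mem_univ _, Finset.notMem_erase b₀ A⟩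
        have : b₀ ∈ τ := hsub hb₀mem
        rw [hτA] at this
        exact (Finset.mem_sdiff.mp this).2 hb₀A
    have heq : univ \ (A.erase b₀) = σ := huniq _ hmem hss
    have : A.erase b₀ = B := by
      rw [hBdef, ← heq, univ_sdiff_sdiff]
    have hx2 : x ∈ A.erase b₀ := Finset.mem_erase.mpr ⟨fun h => hxB (h ▸ hb₀), hxA⟩
    rw [this] at hx2
    exact hxB hx2
  have hchar : ∀ ρ, ρ ∈ dualOf (L \ {τ, σ}) → ρ ∈ dualOf L ∨ ρ = A ∨ ρ = B := by
    intro ρ hρ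
    by_cases h : univ \ ρ ∈ L
    · have h2 : univ \ ρ ∈ ({τ, σ} : Set (Finset (Fin m))) := by
        by_contra hc
        exact hρ ⟨h, hc⟩
      rcases h2 with h' | h'
      · right; left; rw [← univ_sdiff_sdiff ρ, h']
      · right; right; rw [← univ_sdiff_sdiff ρ, h']
    · exact Or.inl h
  have hsub2 : dualOf L ⊆ dualOf (L \ {τ, σ}) := fun ρ hρ h2 => hρ h2.1
  have hAmem : ∀ y ∈ stdHull A, pushMap B hB x y ∈ geomReal (dualOf L) := by
    intro y hy
    obtain ⟨b₀, hb₀B, hmem⟩ := pushMap_mem hB hxB hxA hBA hy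
    refine mem_geomReal.mpr ⟨A.erase b₀, herase b₀ hb₀B, ?_, hmem⟩
    intro hempty
    have : x ∈ A.erase b₀ :=
      Finset.mem_erase.mpr ⟨fun h => hxB (h ▸ hb₀B), hxA⟩
    rw [hempty] at this
    exact absurd this (Finset.notMem_empty x)
  have hmaps : ∀ y ∈ geomReal (dualOf (L \ {τ, σ})),
      pushMap B hB x y ∈ geomReal (dualOf L) := by
    intro y hy
    obtain ⟨ρ, hρ, hρne, hyρ⟩ := mem_geomReal.mp hy
    rcases hchar ρ hρ with h | h | h
    · rw [hid ρ h y hyρ]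
      exact mem_geomReal.mpr ⟨ρ, h, hρne, hyρ⟩
    · exact hAmem y (h ▸ hyρ)
    · exact hAmem y (stdHull_mono hBA (h ▸ hyρ))
  have hsmallbig : geomReal (dualOf L) ⊆ geomReal (dualOf (L \ {τ, σ})) :=
    geomReal_mono hsub2
  let i : C(↥(geomReal (dualOf L)), ↥(geomReal (dualOf (L \ {τ, σ})))) :=
    ⟨Set.inclusion hsmallbig, continuous_inclusion hsmallbig⟩
  let r : C(↥(geomReal (dualOf (L \ {τ, σ}))), ↥(geomReal (dualOf L))) :=
    ⟨fun y => ⟨pushMap B hB x y.1, hmaps y.1 y.2⟩,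
      Continuous.subtype_mk ((pushMap_continuous B hB x).comp continuous_subtype_val) _⟩
  apply contractible_of_retract i r ?_ hbig
  intro z
  apply Subtype.ext
  obtain ⟨ρ, hρ, hρne, hzρ⟩ := mem_geomReal.mp z.2
  exact hid ρ hρ z.1 hzρ

/-- Main induction along the collapsing sequence. -/
lemma main_ind {m : ℕ} (v : Fin m) (L : Set (Finset (Fin m)))
    (h : Relation.ReflTransGen ElemCollapse L ({∅, {v}} : Set (Finset (Fin m)))) :
    (∀ s ∈ L, ∀ t ⊆ s, t ∈ L) → (univ : Finset (Fin m)) ∉ L →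
    ContractibleSpace ↥(geomReal (dualOf L)) := by
  induction h using Relation.ReflTransGen.head_induction_on with
  | refl =>
    intro _ hu
    exact base_contractible hu
  | @head L₁ L₂ h' htail ih =>
    intro hDC hu
    obtain ⟨τ, σ, hτL, hσL, hts, huniq, rfl⟩ := h'
    have hDC2 : ∀ s ∈ L₁ \ ({τ, σ} : Set _), ∀ t ⊆ s, t ∈ L₁ \ ({τ, σ} : Set _) := by
      intro s hs t ht
      refine ⟨hDC s hs.1 t ht, ?_⟩
      rintro (rfl | rfl)
      · by_cases hsτ : s = t
        · exact hs.2 (Or.inl hsτ)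
        · have h1 : t ⊂ s := lt_of_le_of_ne ht (fun h => hsτ (h.symm))
          exact hs.2 (Or.inr (huniq s hs.1 h1))
      · have h1 : τ ⊂ s := lt_of_lt_of_le hts ht
        exact hs.2 (Or.inr (huniq s hs.1 h1))
    have hu2 : (univ : Finset (Fin m)) ∉ L₁ \ ({τ, σ} : Set _) := fun h => hu h.1
    exact step_contractible hσL hts huniq hDC hu (ih hDC2 hu2)

/-- If the Alexander dual of `K` is collapsible, then the geometric realization `|K|`
is contractible. -/
theorem contractible_of_dual_collapsible {m : ℕ} (K : Set (Finset (Fin m)))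
    (hK : IsComplex K) (hcoll : Collapsible (alexDual K)) :
    ContractibleSpace ↥(geomReal K) := by
  obtain ⟨v, hrtg⟩ := hcoll
  have hKd : geomReal K = geomReal (dualOf (alexDual K)) := by
    congr 1
    ext ρ
    simp [dualOf, alexDual, univ_sdiff_sdiff]
  rw [hKd]
  apply main_ind v _ hrtg
  · intro s hs t hts hmem
    exact hs (hK.2 _ hmem _ (Finset.sdiff_subset_sdiff (Finset.Subset.refl _) hts))
  · intro h
    apply h
    rw [Finset.sdiff_self]
    exact hK.1
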